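/- Let W be a finite antipodal set in ℝ^k with m elements whose affine span is all of ℝ^k (so conv(W) has positive Lebesgue measure). Then for every real number a with 0 < a < 1/2, one has m · a^k · vol(conv W) ≤ vol(conv W); consequently m ≤ a^{−k} for every a ∈ (0, 1/2), and hence m ≤ 2^k. -/

import Mathlib

open MeasureTheory ENNReal

/-- The volume-packing inequality for a full-dimensional antipodal set `W` in `ℝ^k`:
for every `0 < a < 1/2` one has `m * a ^ k * vol(conv W) ≤ vol(conv W)` and
`m ≤ a⁻¹ ^ k`, hence `m ≤ 2 ^ k`, where `m` is the number of points of `W`. -/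
theorem antipodal_volume_packing (k : ℕ) (W : Finset (EuclideanSpace ℝ (Fin k)))
    (hW : ∀ x ∈ W, ∀ y ∈ W, x ≠ y →
      ∃ f : EuclideanSpace ℝ (Fin k) →ₗ[ℝ] ℝ, f ≠ 0 ∧ f x < f y ∧
        ∀ w ∈ W, f x ≤ f w ∧ f w ≤ f y)
    (hspan : affineSpan ℝ (W : Set (EuclideanSpace ℝ (Fin k))) = ⊤) :
    (∀ a : ℝ, 0 < a → a < 1 / 2 →
      (W.card : ℝ) * a ^ k *
          (volume (convexHull ℝ (W : Set (EuclideanSpace ℝ (Fin k))))).toReal ≤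
        (volume (convexHull ℝ (W : Set (EuclideanSpace ℝ (Fin k))))).toReal ∧
      (W.card : ℝ) ≤ a⁻¹ ^ k) ∧
    W.card ≤ 2 ^ k := by
  set C : Set (EuclideanSpace ℝ (Fin k)) := convexHull ℝ (W : Set (EuclideanSpace ℝ (Fin k)))
    with hCdef
  have hconv : Convex ℝ C := convex_convexHull ℝ _
  have hcomp : IsCompact C := W.finite_toSet.isCompact_convexHull (𝕜 := ℝ)
  have hfin : volume C ≠ ⊤ := hcomp.measure_lt_top.ne
  have hint : (interior C).Nonempty :=
    interior_convexHull_nonempty_iff_affineSpan_eq_top.2 hspan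
  have hposC : 0 < volume C := Measure.measure_pos_of_nonempty_interior _ hint
  have hV : 0 < (volume C).toReal := ENNReal.toReal_pos hposC.ne' hfin
  -- the key ENNReal inequality
  have key : ∀ a : ℝ, 0 < a → a < 1 / 2 →
      (W.card : ℝ≥0∞) * (ENNReal.ofReal (a ^ k) * volume C) ≤ volume C := by
    intro a ha ha2
    set T : EuclideanSpace ℝ (Fin k) → Set (EuclideanSpace ℝ (Fin k)) :=
      fun x => AffineMap.homothety x a '' C with hT
    have hTmeas : ∀ x, MeasurableSet (T x) := by
      intro x
      exact ((hcomp.image (AffineMap.homothety_continuous x a)).isClosed).measurableSet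
    have hTvol : ∀ x, volume (T x) = ENNReal.ofReal (a ^ k) * volume C := by
      intro x
      rw [hT]
      simp only [Measure.addHaar_image_homothety, finrank_euclideanSpace_fin]
      rw [abs_of_nonneg (pow_nonneg ha.le k)]
    have hTsub : ∀ x ∈ W, T x ⊆ C := by
      intro x hx p hp
      obtain ⟨c, hc, rfl⟩ := hp
      have hxC : x ∈ C := subset_convexHull ℝ _ hx
      have : AffineMap.homothety x a c = a • c + (1 - a) • x := by
        simp [AffineMap.homothety_apply, smul_sub, sub_smul, vsub_eq_sub, vadd_eq_add]
        abel
      rw [this]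
      exact hconv hc hxC ha.le (by linarith) (by ring)
    have hdisj : (W : Set (EuclideanSpace ℝ (Fin k))).PairwiseDisjoint T := by
      intro x hx y hy hxy
      obtain ⟨f, -, hfxy, hbound⟩ := hW x hx y hy hxy
      have hfC : ∀ c ∈ C, f x ≤ f c ∧ f c ≤ f y := by
        intro c hc
        have : C ⊆ f ⁻¹' Set.Icc (f x) (f y) := by
          refine convexHull_min ?_ ((convex_Icc _ _).linear_preimage f)
          intro w hw
          exact hbound w hw
        exact this hc
      refine Set.disjoint_left.2 ?_
      rintro p ⟨c, hc, rfl⟩ ⟨d, hd, hpd⟩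
      have h1 : f (AffineMap.homothety x a c) = a * (f c - f x) + f x := by
        simp [AffineMap.homothety_apply, vsub_eq_sub, vadd_eq_add, map_sub, _root_.map_smul,
          smul_eq_mul]
      have h2 : f (AffineMap.homothety y a d) = a * (f d - f y) + f y := by
        simp [AffineMap.homothety_apply, vsub_eq_sub, vadd_eq_add, map_sub, _root_.map_smul,
          smul_eq_mul]
      have hc' := hfC c hc
      have hd' := hfC d hd
      have : f (AffineMap.homothety x a c) < f (AffineMap.homothety y a d) := by
        rw [h1, h2]
        nlinarith [mul_pos (by linarith : (0:ℝ) < 1 - 2 * a)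
          (by linarith : (0:ℝ) < f y - f x)]
      rw [hpd] at this
      exact lt_irrefl _ this
    calc (W.card : ℝ≥0∞) * (ENNReal.ofReal (a ^ k) * volume C)
        = ∑ x ∈ W, volume (T x) := by
          rw [Finset.sum_congr rfl fun x _ => hTvol x, Finset.sum_const, nsmul_eq_mul]
      _ = volume (⋃ x ∈ W, T x) :=
          (measure_biUnion_finset hdisj fun x _ => hTmeas x).symm
      _ ≤ volume C := measure_mono (Set.iUnion₂_subset hTsub)
  have main : ∀ a : ℝ, 0 < a → a < 1 / 2 →
      (W.card : ℝ) * a ^ k * (volume C).toReal ≤ (volume C).toReal ∧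
      (W.card : ℝ) ≤ a⁻¹ ^ k := by
    intro a ha ha2
    have hE := key a ha ha2
    have h1 : (W.card : ℝ) * a ^ k * (volume C).toReal ≤ (volume C).toReal := by
      have := ENNReal.toReal_mono hfin hE
      rwa [ENNReal.toReal_mul, ENNReal.toReal_mul, ENNReal.toReal_ofReal
        (pow_nonneg ha.le k), ENNReal.toReal_natCast, ← mul_assoc] at this
    refine ⟨h1, ?_⟩
    have h2 : (W.card : ℝ) * a ^ k ≤ 1 :=
      le_of_mul_le_mul_right (by rw [one_mul]; exact h1) hV
    rw [inv_pow, ← one_div, le_div_iff₀ (pow_pos ha k)]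
    exact h2
  refine ⟨main, ?_⟩
  -- take limit a → 1/2⁻
  have hlim : Filter.Tendsto (fun a : ℝ => a⁻¹ ^ k) (nhdsWithin (1/2) (Set.Iio (1/2)))
      (nhds ((2:ℝ) ^ k)) := by
    have : ContinuousAt (fun a : ℝ => a⁻¹ ^ k) (1/2) :=
      (continuousAt_inv₀ (by norm_num)).pow k
    have h2 := this.tendsto.mono_left
      (nhdsWithin_le_nhds (s := Set.Iio (1/2 : ℝ)))
    simpa using h2
  have hcast : (W.card : ℝ) ≤ (2:ℝ) ^ k := by
    refine ge_of_tendsto hlim ?_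
    filter_upwards [Ioo_mem_nhdsLT (by norm_num : (0:ℝ) < 1/2)]
      with a ha
    exact (main a ha.1 ha.2).2
  exact_mod_cast hcast
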